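/- Let X be a random variable with values in [0,1]^d admitting a density with respect to the Lebesgue measure on [0,1]^d, let Z be a real-valued square-integrable random variable, and let ((X_m, Z_m))_{m ≥ 1} be a sequence of independent random variables each distributed as (X, Z). For a ∈ [0,1]^d write B_a = Π_{j=1}^d [0, a(j)). Define ν_M(α, β, a) = (1/M) Σ_{m=1}^M (Z_m − α·1{X_m ∈ B_a} − β·1{X_m ∉ B_a})² and ν(α, β, a) = E[(Z − α·1{X ∈ B_a} − β·1{X ∉ B_a})²]. Fix C > 0, set K = [−C, C]² × [0,1]^d and S* = {(α, β, a) ∈ K : ν(α, β, a) = inf_K ν}, and for each M let (α_M, β_M, a_M) ∈ K satisfy ν_M(α_M, β_M, a_M) = inf_K ν_M. Then, almost surely, the Euclidean distance from (α_M, β_M, a_M) to S* tends to 0 as M → ∞. -/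

import Mathlib

open MeasureTheory ProbabilityTheory Filter Topology

/-- The squared loss `(z − α·1{x ∈ B_a} − β·1{x ∉ B_a})²`, where
`B_a = Π_j [0, a(j))`, as a function of the data `(x, z)` and parameters `(α, β, a)`. -/
noncomputable def treeLoss {d : ℕ} (x : Fin d → ℝ) (z : ℝ) (p : ℝ × ℝ × (Fin d → ℝ)) : ℝ :=
  (z - p.1 * (Set.univ.pi fun j => Set.Ico (0 : ℝ) (p.2.2 j)).indicator (fun _ => (1 : ℝ)) x
     - p.2.1 * ((Set.univ.pi fun j => Set.Ico (0 : ℝ) (p.2.2 j))ᶜ.indicator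
        (fun _ => (1 : ℝ)) x)) ^ 2


namespace TreeAux

variable {d : ℕ}

/-- The box `Π_j [0, a j)`. -/
def box (a : Fin d → ℝ) : Set (Fin d → ℝ) := Set.univ.pi fun j => Set.Ico (0:ℝ) (a j)

lemma measurableSet_box (a : Fin d → ℝ) : MeasurableSet (box a) :=
  MeasurableSet.univ_pi fun _ => measurableSet_Ico

lemma box_mono {a b : Fin d → ℝ} (h : ∀ j, a j ≤ b j) : box a ⊆ box b := fun x hx j hj =>
  ⟨(hx j hj).1, lt_of_lt_of_le (hx j hj).2 (h j)⟩

lemma treeLoss_nonneg (x : Fin d → ℝ) (z : ℝ) (p : ℝ × ℝ × (Fin d → ℝ)) :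
    0 ≤ treeLoss x z p := sq_nonneg _

/-- Splitting of the loss in two indicator pieces, as a function of `w = (x, z)`. -/
lemma treeLoss_eq (w : (Fin d → ℝ) × ℝ) (p : ℝ × ℝ × (Fin d → ℝ)) :
    treeLoss w.1 w.2 p
      = (Prod.fst ⁻¹' box p.2.2).indicator (fun w => (w.2 - p.1)^2) w
        + ((Prod.fst ⁻¹' box p.2.2)ᶜ).indicator (fun w => (w.2 - p.2.1)^2) w := by
  simp only [treeLoss, box]
  by_cases h : w.1 ∈ Set.univ.pi fun j => Set.Ico (0:ℝ) (p.2.2 j)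
  · have h' : w ∈ Prod.fst ⁻¹' (Set.univ.pi fun j => Set.Ico (0:ℝ) (p.2.2 j)) := h
    rw [Set.indicator_of_mem h, Set.indicator_of_mem h',
      Set.indicator_of_notMem (show w ∉ _ᶜ by simpa using h'),
      Set.indicator_of_notMem (show w.1 ∉ _ᶜ by simpa using h)]
    ring
  · have h' : w ∉ Prod.fst ⁻¹' (Set.univ.pi fun j => Set.Ico (0:ℝ) (p.2.2 j)) := h
    rw [Set.indicator_of_notMem h, Set.indicator_of_notMem h',
      Set.indicator_of_mem (show w ∈ _ᶜ by simpa using h'),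
      Set.indicator_of_mem (show w.1 ∈ _ᶜ by simpa using h)]
    ring

/-- Upper envelope over the ball of radius `r` around `p`. -/
noncomputable def upEnv (p : ℝ × ℝ × (Fin d → ℝ)) (r : ℝ) (w : (Fin d → ℝ) × ℝ) : ℝ :=
  (Prod.fst ⁻¹' box (fun j => p.2.2 j + r)).indicator (fun w => (|w.2 - p.1| + r)^2) w
  + ((Prod.fst ⁻¹' box (fun j => p.2.2 j - r))ᶜ).indicator (fun w => (|w.2 - p.2.1| + r)^2) w

/-- Lower envelope over the ball of radius `r` around `p`. -/
noncomputable def loEnv (p : ℝ × ℝ × (Fin d → ℝ)) (r : ℝ) (w : (Fin d → ℝ) × ℝ) : ℝ :=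
  (Prod.fst ⁻¹' box (fun j => p.2.2 j - r)).indicator (fun w => (max (|w.2 - p.1| - r) 0)^2) w
  + ((Prod.fst ⁻¹' box (fun j => p.2.2 j + r))ᶜ).indicator (fun w => (max (|w.2 - p.2.1| - r) 0)^2) w

lemma measurable_box_piece (b : Fin d → ℝ) (f : ℝ → ℝ) (hf : Measurable f) :
    Measurable fun w : (Fin d → ℝ) × ℝ => (Prod.fst ⁻¹' box b).indicator (fun w => f w.2) w :=
  (hf.comp measurable_snd).indicator (measurable_fst (measurableSet_box b))

lemma measurable_box_piece_compl (b : Fin d → ℝ) (f : ℝ → ℝ) (hf : Measurable f) :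
    Measurable fun w : (Fin d → ℝ) × ℝ => ((Prod.fst ⁻¹' box b)ᶜ).indicator (fun w => f w.2) w :=
  (hf.comp measurable_snd).indicator (measurable_fst (measurableSet_box b)).compl

lemma meas_sq_abs_add (c r : ℝ) : Measurable fun z : ℝ => (|z - c| + r)^2 :=
  (((continuous_abs.comp (continuous_id.sub continuous_const)).add continuous_const).pow 2).measurable

lemma meas_sq_max (c r : ℝ) : Measurable fun z : ℝ => (max (|z - c| - r) 0)^2 :=
  ((((continuous_abs.comp (continuous_id.sub continuous_const)).sub
    continuous_const).max continuous_const).pow 2).measurable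

lemma meas_sq_sub (c : ℝ) : Measurable fun z : ℝ => (z - c)^2 :=
  ((continuous_id.sub continuous_const).pow 2).measurable

lemma measurable_upEnv (p : ℝ × ℝ × (Fin d → ℝ)) (r : ℝ) : Measurable (upEnv p r) :=
  (measurable_box_piece _ _ (meas_sq_abs_add p.1 r)).add
    (measurable_box_piece_compl _ _ (meas_sq_abs_add p.2.1 r))

lemma measurable_loEnv (p : ℝ × ℝ × (Fin d → ℝ)) (r : ℝ) : Measurable (loEnv p r) :=
  (measurable_box_piece _ _ (meas_sq_max p.1 r)).add
    (measurable_box_piece_compl _ _ (meas_sq_max p.2.1 r))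

lemma measurable_lossFn (p : ℝ × ℝ × (Fin d → ℝ)) :
    Measurable fun w : (Fin d → ℝ) × ℝ => treeLoss w.1 w.2 p := by
  have h : (fun w : (Fin d → ℝ) × ℝ => treeLoss w.1 w.2 p)
      = fun w => (Prod.fst ⁻¹' box p.2.2).indicator (fun w => (w.2 - p.1)^2) w
        + ((Prod.fst ⁻¹' box p.2.2)ᶜ).indicator (fun w => (w.2 - p.2.1)^2) w :=
    funext fun w => treeLoss_eq w p
  rw [h]
  exact (measurable_box_piece _ _ (meas_sq_sub p.1)).add
    (measurable_box_piece_compl _ _ (meas_sq_sub p.2.1))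

lemma dist_coords {q p : ℝ × ℝ × (Fin d → ℝ)} {r : ℝ} (hr : 0 ≤ r) (h : dist q p ≤ r) :
    |q.1 - p.1| ≤ r ∧ |q.2.1 - p.2.1| ≤ r ∧ ∀ j, |q.2.2 j - p.2.2 j| ≤ r := by
  rw [Prod.dist_eq, max_le_iff, Prod.dist_eq, max_le_iff] at h
  refine ⟨by simpa [Real.dist_eq] using h.1, by simpa [Real.dist_eq] using h.2.1, fun j => ?_⟩
  simpa [Real.dist_eq] using (dist_pi_le_iff hr).1 h.2.2 j

lemma indicator_le_indicator_of_subset' {γ : Type*} {s t : Set γ} (hst : s ⊆ t)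
    {f g : γ → ℝ} (hg : ∀ w, 0 ≤ g w) (hfg : ∀ w ∈ s, f w ≤ g w) (w : γ) :
    s.indicator f w ≤ t.indicator g w := by
  by_cases h : w ∈ s
  · rw [Set.indicator_of_mem h, Set.indicator_of_mem (hst h)]; exact hfg w h
  · rw [Set.indicator_of_notMem h]
    exact Set.indicator_nonneg (fun w _ => hg w) w

lemma abs_sub_le_of_abs_sub_le {z c c' r : ℝ} (h : |c' - c| ≤ r) :
    |z - c'| ≤ |z - c| + r := by
  calc |z - c'| ≤ |z - c| + |c - c'| := abs_sub_le _ _ _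
    _ ≤ |z - c| + r := by have h2 := abs_sub_comm c c'; linarith

lemma treeLoss_le_upEnv {p q : ℝ × ℝ × (Fin d → ℝ)} {r : ℝ} (hr : 0 ≤ r)
    (hq : dist q p ≤ r) (w : (Fin d → ℝ) × ℝ) :
    treeLoss w.1 w.2 q ≤ upEnv p r w := by
  obtain ⟨h1, h2, h3⟩ := dist_coords hr hq
  rw [treeLoss_eq, upEnv]
  apply add_le_add
  · refine indicator_le_indicator_of_subset' ?_ (fun v => ?_) (fun v hv => ?_) w
    · exact Set.preimage_mono (box_mono fun j => by have := (abs_le.1 (h3 j)).2; linarith)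
    · positivity
    · rw [← sq_abs (v.2 - q.1)]
      exact pow_le_pow_left₀ (abs_nonneg _) (abs_sub_le_of_abs_sub_le h1) 2
  · refine indicator_le_indicator_of_subset' ?_ (fun v => ?_) (fun v hv => ?_) w
    · exact Set.compl_subset_compl.2 <| Set.preimage_mono <|
        box_mono fun j => by have := (abs_le.1 (h3 j)).1; linarith
    · positivity
    · rw [← sq_abs (v.2 - q.2.1)]
      exact pow_le_pow_left₀ (abs_nonneg _) (abs_sub_le_of_abs_sub_le h2) 2

lemma loEnv_le_treeLoss {p q : ℝ × ℝ × (Fin d → ℝ)} {r : ℝ} (hr : 0 ≤ r)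
    (hq : dist q p ≤ r) (w : (Fin d → ℝ) × ℝ) :
    loEnv p r w ≤ treeLoss w.1 w.2 q := by
  obtain ⟨h1, h2, h3⟩ := dist_coords hr hq
  rw [treeLoss_eq, loEnv]
  apply add_le_add
  · refine indicator_le_indicator_of_subset' ?_ (fun v => ?_) (fun v hv => ?_) w
    · exact Set.preimage_mono (box_mono fun j => by have := (abs_le.1 (h3 j)).1; linarith)
    · positivity
    · rw [← sq_abs (v.2 - q.1)]
      refine pow_le_pow_left₀ (le_max_right _ _) (max_le ?_ (abs_nonneg _)) 2
      have h1' : |p.1 - q.1| ≤ r := by rw [abs_sub_comm]; exact h1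
      have := abs_sub_le_of_abs_sub_le (z := v.2) h1'
      linarith
  · refine indicator_le_indicator_of_subset' ?_ (fun v => ?_) (fun v hv => ?_) w
    · exact Set.compl_subset_compl.2 <| Set.preimage_mono <|
        box_mono fun j => by have := (abs_le.1 (h3 j)).2; linarith
    · positivity
    · rw [← sq_abs (v.2 - q.2.1)]
      refine pow_le_pow_left₀ (le_max_right _ _) (max_le ?_ (abs_nonneg _)) 2
      have h2' : |p.2.1 - q.2.1| ≤ r := by rw [abs_sub_comm]; exact h2
      have := abs_sub_le_of_abs_sub_le (z := v.2) h2'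
      linarith

lemma rseq_pos (n : ℕ) : (0:ℝ) < 1/((n:ℝ)+1) := by positivity

lemma rseq_le_one (n : ℕ) : 1/((n:ℝ)+1) ≤ 1 := by
  rw [div_le_one (by positivity)]
  have : (0:ℝ) ≤ n := Nat.cast_nonneg n
  linarith

lemma tendsto_env (p : ℝ × ℝ × (Fin d → ℝ)) {w : (Fin d → ℝ) × ℝ}
    (hw1 : ∀ j, 0 ≤ w.1 j) (hw2 : ∀ j, w.1 j ≠ p.2.2 j) :
    Tendsto (fun n : ℕ => upEnv p (1/((n:ℝ)+1)) w) atTop (𝓝 (treeLoss w.1 w.2 p)) ∧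
    Tendsto (fun n : ℕ => loEnv p (1/((n:ℝ)+1)) w) atTop (𝓝 (treeLoss w.1 w.2 p)) := by
  have hr : Tendsto (fun n : ℕ => 1/((n:ℝ)+1)) atTop (𝓝 0) :=
    tendsto_one_div_add_atTop_nhds_zero_nat
  by_cases hx : w.1 ∈ box p.2.2
  · have hev : ∀ᶠ n : ℕ in atTop, w.1 ∈ box (fun j => p.2.2 j - 1/((n:ℝ)+1)) := by
      have h : ∀ j : Fin d, ∀ᶠ n : ℕ in atTop, 1/((n:ℝ)+1) < p.2.2 j - w.1 j := fun j =>
        hr.eventually (eventually_lt_nhds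
          (by have := (hx j (Set.mem_univ j)).2; have := hw1 j; linarith))
      filter_upwards [eventually_all.2 h] with n hn j _
      exact ⟨hw1 j, by have := hn j; linarith⟩
    have hmem_hi : ∀ n : ℕ, w.1 ∈ box (fun j => p.2.2 j + 1/((n:ℝ)+1)) := fun n =>
      box_mono (fun j => le_add_of_nonneg_right (rseq_pos n).le) hx
    have hloss : treeLoss w.1 w.2 p = (w.2 - p.1)^2 := by
      rw [treeLoss_eq,
        Set.indicator_of_mem (show w ∈ Prod.fst ⁻¹' box p.2.2 from hx),
        Set.indicator_of_notMem (show w ∉ (Prod.fst ⁻¹' box p.2.2)ᶜ by simpa using hx)]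
      ring
    constructor
    · have hEq : (fun n : ℕ => (|w.2 - p.1| + 1/((n:ℝ)+1))^2)
          =ᶠ[atTop] fun n : ℕ => upEnv p (1/((n:ℝ)+1)) w := by
        filter_upwards [hev] with n hn
        rw [upEnv,
          Set.indicator_of_mem (show w ∈ Prod.fst ⁻¹' box (fun j => p.2.2 j + 1/((n:ℝ)+1))
            from hmem_hi n),
          Set.indicator_of_notMem
            (show w ∉ (Prod.fst ⁻¹' box (fun j => p.2.2 j - 1/((n:ℝ)+1)))ᶜ by simpa using hn)]
        ring
      refine Tendsto.congr' hEq ?_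
      have h := ((hr.const_add |w.2 - p.1|).pow 2)
      simpa [hloss, sq_abs] using h
    · have hEq : (fun n : ℕ => (max (|w.2 - p.1| - 1/((n:ℝ)+1)) 0)^2)
          =ᶠ[atTop] fun n : ℕ => loEnv p (1/((n:ℝ)+1)) w := by
        filter_upwards [hev] with n hn
        rw [loEnv,
          Set.indicator_of_mem (show w ∈ Prod.fst ⁻¹' box (fun j => p.2.2 j - 1/((n:ℝ)+1))
            from hn),
          Set.indicator_of_notMem
            (show w ∉ (Prod.fst ⁻¹' box (fun j => p.2.2 j + 1/((n:ℝ)+1)))ᶜ by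
              simpa using hmem_hi n)]
        ring
      refine Tendsto.congr' hEq ?_
      have h := (((hr.const_sub |w.2 - p.1|).max (tendsto_const_nhds : Tendsto (fun _ : ℕ => (0:ℝ)) atTop (𝓝 0))).pow 2)
      simpa [hloss, sq_abs, sub_zero, max_eq_left (abs_nonneg (w.2 - p.1))] using h
  · obtain ⟨j0, hj0⟩ : ∃ j0, p.2.2 j0 < w.1 j0 := by
      by_contra hcon
      push_neg at hcon
      exact hx fun j _ => ⟨hw1 j, lt_of_le_of_ne (hcon j) (hw2 j)⟩
    have hev : ∀ᶠ n : ℕ in atTop, w.1 ∉ box (fun j => p.2.2 j + 1/((n:ℝ)+1)) := by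
      have h : ∀ᶠ n : ℕ in atTop, 1/((n:ℝ)+1) < w.1 j0 - p.2.2 j0 :=
        hr.eventually (eventually_lt_nhds (by linarith))
      filter_upwards [h] with n hn hmem
      have := (hmem j0 (Set.mem_univ j0)).2
      linarith
    have hnot_lo : ∀ n : ℕ, w.1 ∉ box (fun j => p.2.2 j - 1/((n:ℝ)+1)) := fun n hmem => by
      have := (hmem j0 (Set.mem_univ j0)).2
      have := rseq_pos n
      linarith
    have hloss : treeLoss w.1 w.2 p = (w.2 - p.2.1)^2 := by
      rw [treeLoss_eq,
        Set.indicator_of_notMem (show w ∉ Prod.fst ⁻¹' box p.2.2 from hx),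
        Set.indicator_of_mem (show w ∈ (Prod.fst ⁻¹' box p.2.2)ᶜ by simpa using hx)]
      ring
    constructor
    · have hEq : (fun n : ℕ => (|w.2 - p.2.1| + 1/((n:ℝ)+1))^2)
          =ᶠ[atTop] fun n : ℕ => upEnv p (1/((n:ℝ)+1)) w := by
        filter_upwards [hev] with n hn
        rw [upEnv,
          Set.indicator_of_notMem
            (show w ∉ Prod.fst ⁻¹' box (fun j => p.2.2 j + 1/((n:ℝ)+1)) from hn),
          Set.indicator_of_mem
            (show w ∈ (Prod.fst ⁻¹' box (fun j => p.2.2 j - 1/((n:ℝ)+1)))ᶜ by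
              simpa using hnot_lo n)]
        ring
      refine Tendsto.congr' hEq ?_
      have h := ((hr.const_add |w.2 - p.2.1|).pow 2)
      simpa [hloss, sq_abs] using h
    · have hEq : (fun n : ℕ => (max (|w.2 - p.2.1| - 1/((n:ℝ)+1)) 0)^2)
          =ᶠ[atTop] fun n : ℕ => loEnv p (1/((n:ℝ)+1)) w := by
        filter_upwards [hev] with n hn
        rw [loEnv,
          Set.indicator_of_notMem
            (show w ∉ Prod.fst ⁻¹' box (fun j => p.2.2 j - 1/((n:ℝ)+1)) from hnot_lo n),
          Set.indicator_of_mem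
            (show w ∈ (Prod.fst ⁻¹' box (fun j => p.2.2 j + 1/((n:ℝ)+1)))ᶜ by simpa using hn)]
        ring
      refine Tendsto.congr' hEq ?_
      have h := (((hr.const_sub |w.2 - p.2.1|).max (tendsto_const_nhds : Tendsto (fun _ : ℕ => (0:ℝ)) atTop (𝓝 0))).pow 2)
      simpa [hloss, sq_abs, sub_zero, max_eq_left (abs_nonneg (w.2 - p.2.1))] using h

lemma abs_sub_le'' (a b : ℝ) : |a - b| ≤ |a| + |b| := by
  rw [sub_eq_add_neg]
  exact (abs_add_le _ _).trans (by rw [abs_neg])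

lemma abs_indicator_le_bound {γ : Type*} (s : Set γ) (f g : γ → ℝ) (h0 : ∀ v, 0 ≤ f v)
    (hle : ∀ v, f v ≤ g v) (hg : ∀ v, 0 ≤ g v) (w : γ) : |s.indicator f w| ≤ g w := by
  by_cases h : w ∈ s
  · rw [Set.indicator_of_mem h, abs_of_nonneg (h0 w)]; exact hle w
  · rw [Set.indicator_of_notMem h, abs_zero]; exact hg w

/-- Uniform bound for envelopes and loss over the fattened parameter set. -/
lemma env_abs_le {Cb : ℝ} {p : ℝ × ℝ × (Fin d → ℝ)} (h1 : |p.1| ≤ Cb) (h2 : |p.2.1| ≤ Cb)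
    {r : ℝ} (hr0 : 0 ≤ r) (hr1 : r ≤ 1) (w : (Fin d → ℝ) × ℝ) :
    |upEnv p r w| ≤ 2*(|w.2| + (Cb+1))^2 ∧ |loEnv p r w| ≤ 2*(|w.2| + (Cb+1))^2 ∧
      |treeLoss w.1 w.2 p| ≤ 2*(|w.2| + (Cb+1))^2 := by
  have key : ∀ c : ℝ, |c| ≤ Cb → ∀ z : ℝ,
      (|z - c| + r)^2 ≤ (|z| + (Cb+1))^2 ∧ (max (|z - c| - r) 0)^2 ≤ (|z| + (Cb+1))^2 ∧
      (z - c)^2 ≤ (|z| + (Cb+1))^2 := by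
    intro c hc z
    have hzc : |z - c| ≤ |z| + Cb := (abs_sub_le'' z c).trans (by linarith)
    refine ⟨pow_le_pow_left₀ (by have := abs_nonneg (z - c); linarith) (by linarith) 2, ?_, ?_⟩
    · exact pow_le_pow_left₀ (le_max_right _ _) (max_le (by linarith) (by have := abs_nonneg c; have := abs_nonneg z; linarith)) 2
    · rw [← sq_abs (z - c)]
      exact pow_le_pow_left₀ (abs_nonneg _) (by linarith) 2
  have hB : ∀ z : ℝ, (0:ℝ) ≤ (|z| + (Cb+1))^2 := fun z => by positivity
  refine ⟨?_, ?_, ?_⟩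
  · rw [upEnv]
    have b1 := abs_indicator_le_bound (Prod.fst ⁻¹' box (fun j => p.2.2 j + r))
      (fun v : (Fin d → ℝ) × ℝ => (|v.2 - p.1| + r)^2) (fun v => (|v.2| + (Cb+1))^2)
      (fun v => by positivity) (fun v => (key p.1 h1 v.2).1) (fun v => hB v.2) w
    have b2 := abs_indicator_le_bound ((Prod.fst ⁻¹' box (fun j => p.2.2 j - r))ᶜ)
      (fun v : (Fin d → ℝ) × ℝ => (|v.2 - p.2.1| + r)^2) (fun v => (|v.2| + (Cb+1))^2)
      (fun v => by positivity) (fun v => (key p.2.1 h2 v.2).1) (fun v => hB v.2) w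
    refine (abs_add_le _ _).trans ?_
    linarith
  · rw [loEnv]
    have b1 := abs_indicator_le_bound (Prod.fst ⁻¹' box (fun j => p.2.2 j - r))
      (fun v : (Fin d → ℝ) × ℝ => (max (|v.2 - p.1| - r) 0)^2) (fun v => (|v.2| + (Cb+1))^2)
      (fun v => by positivity) (fun v => (key p.1 h1 v.2).2.1) (fun v => hB v.2) w
    have b2 := abs_indicator_le_bound ((Prod.fst ⁻¹' box (fun j => p.2.2 j + r))ᶜ)
      (fun v : (Fin d → ℝ) × ℝ => (max (|v.2 - p.2.1| - r) 0)^2) (fun v => (|v.2| + (Cb+1))^2)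
      (fun v => by positivity) (fun v => (key p.2.1 h2 v.2).2.1) (fun v => hB v.2) w
    refine (abs_add_le _ _).trans ?_
    linarith
  · rw [treeLoss_eq]
    have b1 := abs_indicator_le_bound (Prod.fst ⁻¹' box p.2.2)
      (fun v : (Fin d → ℝ) × ℝ => (v.2 - p.1)^2) (fun v => (|v.2| + (Cb+1))^2)
      (fun v => by positivity) (fun v => (key p.1 h1 v.2).2.2) (fun v => hB v.2) w
    have b2 := abs_indicator_le_bound ((Prod.fst ⁻¹' box p.2.2)ᶜ)
      (fun v : (Fin d → ℝ) × ℝ => (v.2 - p.2.1)^2) (fun v => (|v.2| + (Cb+1))^2)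
      (fun v => by positivity) (fun v => (key p.2.1 h2 v.2).2.2) (fun v => hB v.2) w
    refine (abs_add_le _ _).trans ?_
    linarith

section Measure

variable {Ω : Type*} [MeasurableSpace Ω] (μ : Measure Ω) [IsProbabilityMeasure μ]

lemma ae_ne_coords (X : Ω → Fin d → ℝ) (hX : Measurable X)
    (hdens : Measure.map X μ ≪ (volume : Measure (Fin d → ℝ))) (a : Fin d → ℝ) :
    ∀ᵐ ω ∂μ, ∀ j, X ω j ≠ a j := by
  rw [ae_iff]
  have hset : {ω | ¬ ∀ j, X ω j ≠ a j} = ⋃ j, X ⁻¹' {x | x j = a j} := by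
    ext ω
    simp [not_forall]
  rw [hset]
  refine measure_iUnion_null fun j => ?_
  have hs : MeasurableSet {x : Fin d → ℝ | x j = a j} :=
    measurableSet_eq_fun (measurable_pi_apply j) measurable_const
  rw [← Measure.map_apply hX hs]
  refine hdens ?_
  have he : {x : Fin d → ℝ | x j = a j}
      = Set.pi Set.univ (Function.update (fun _ => (Set.univ : Set ℝ)) j {a j}) := by
    ext x
    simp only [Set.mem_setOf_eq, Set.mem_pi, Set.mem_univ, forall_true_left]
    constructor
    · intro h i
      rcases eq_or_ne i j with rfl | hij
      · simp [h]
      · simp [Function.update_of_ne hij]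
    · intro h
      simpa using h j
  rw [he, volume_pi_pi]
  exact Finset.prod_eq_zero (Finset.mem_univ j) (by simp)

lemma integrable_dom {Z : Ω → ℝ} (hZ : MemLp Z 2 μ) (c : ℝ) :
    Integrable (fun ω => 2*(|Z ω| + c)^2) μ := by
  have h1 : MemLp (fun ω => |Z ω| + c) 2 μ := hZ.abs.add (memLp_const c)
  exact h1.integrable_sq.const_mul 2

lemma integrable_comp_of_bound {F : (Fin d → ℝ) × ℝ → ℝ} (hF : Measurable F)
    {X : Ω → Fin d → ℝ} (hX : Measurable X) {Z : Ω → ℝ} (hZ : MemLp Z 2 μ) {c : ℝ}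
    (hbd : ∀ w : (Fin d → ℝ) × ℝ, |F w| ≤ 2*(|w.2| + c)^2) :
    Integrable (fun ω => F (X ω, Z ω)) μ := by
  refine Integrable.mono' (integrable_dom μ hZ c)
    (hF.comp_aemeasurable
      (hX.aemeasurable.prodMk hZ.aestronglyMeasurable.aemeasurable)).aestronglyMeasurable
    (ae_of_all _ fun ω => ?_)
  simpa [Real.norm_eq_abs] using hbd (X ω, Z ω)

variable {X : Ω → Fin d → ℝ} {Z : Ω → ℝ} {C : ℝ}

/-- Integrals of the lower/upper envelopes bracket the expected loss at nearby parameters. -/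
lemma integral_bracket (hX : Measurable X) (hZ : MemLp Z 2 μ) (hC : 0 ≤ C)
    {p q : ℝ × ℝ × (Fin d → ℝ)} {r : ℝ} (hr0 : 0 ≤ r) (hr1 : r ≤ 1)
    (hp1 : |p.1| ≤ C) (hp2 : |p.2.1| ≤ C) (hq : dist q p ≤ r) :
    (∫ ω, loEnv p r (X ω, Z ω) ∂μ) ≤ (∫ ω, treeLoss (X ω) (Z ω) q ∂μ) ∧
    (∫ ω, treeLoss (X ω) (Z ω) q ∂μ) ≤ ∫ ω, upEnv p r (X ω, Z ω) ∂μ := by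
  have hq1 : |q.1| ≤ C + 1 := by
    have := (dist_coords hr0 hq).1
    have := abs_sub_le'' q.1 p.1
    have := abs_sub_abs_le_abs_sub q.1 p.1
    linarith
  have hq2 : |q.2.1| ≤ C + 1 := by
    have := (dist_coords hr0 hq).2.1
    have := abs_sub_abs_le_abs_sub q.2.1 p.2.1
    linarith
  have hp1' : |p.1| ≤ C + 1 := by linarith
  have hp2' : |p.2.1| ≤ C + 1 := by linarith
  have intU : Integrable (fun ω => upEnv p r (X ω, Z ω)) μ :=
    integrable_comp_of_bound μ (measurable_upEnv p r) hX hZ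
      (fun w => (env_abs_le hp1' hp2' hr0 hr1 w).1)
  have intL : Integrable (fun ω => loEnv p r (X ω, Z ω)) μ :=
    integrable_comp_of_bound μ (measurable_loEnv p r) hX hZ
      (fun w => (env_abs_le hp1' hp2' hr0 hr1 w).2.1)
  have intQ : Integrable (fun ω => treeLoss (X ω) (Z ω) q) μ :=
    integrable_comp_of_bound μ (measurable_lossFn q) hX hZ
      (fun w => (env_abs_le (p := q) hq1 hq2 hr0 hr1 w).2.2)
  constructor
  · exact integral_mono intL intQ (fun ω => loEnv_le_treeLoss hr0 hq (X ω, Z ω))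
  · exact integral_mono intQ intU (fun ω => treeLoss_le_upEnv hr0 hq (X ω, Z ω))

/-- Key per-point bracketing: envelopes of small radius have integral close to the
expected loss. -/
lemma exists_bracket (hX : Measurable X) (hXval : ∀ ω, X ω ∈ Set.Icc (0 : Fin d → ℝ) 1)
    (hdens : Measure.map X μ ≪ (volume : Measure (Fin d → ℝ))) (hZ : MemLp Z 2 μ)
    (hC : 0 ≤ C) {p : ℝ × ℝ × (Fin d → ℝ)} (hp1 : |p.1| ≤ C) (hp2 : |p.2.1| ≤ C)
    {ε : ℝ} (hε : 0 < ε) :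
    ∃ r : ℝ, 0 < r ∧ r ≤ 1 ∧
      (∫ ω, upEnv p r (X ω, Z ω) ∂μ) ≤ (∫ ω, treeLoss (X ω) (Z ω) p ∂μ) + ε ∧
      (∫ ω, treeLoss (X ω) (Z ω) p ∂μ) - ε ≤ ∫ ω, loEnv p r (X ω, Z ω) ∂μ := by
  have hp1' : |p.1| ≤ C + 1 := by linarith
  have hp2' : |p.2.1| ≤ C + 1 := by linarith
  have hae : ∀ᵐ ω ∂μ, ∀ j, X ω j ≠ p.2.2 j := ae_ne_coords μ X hX hdens p.2.2
  have hconv : ∀ᵐ ω ∂μ,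
      Tendsto (fun n : ℕ => upEnv p (1/((n:ℝ)+1)) (X ω, Z ω)) atTop
        (𝓝 (treeLoss (X ω) (Z ω) p)) ∧
      Tendsto (fun n : ℕ => loEnv p (1/((n:ℝ)+1)) (X ω, Z ω)) atTop
        (𝓝 (treeLoss (X ω) (Z ω) p)) := by
    filter_upwards [hae] with ω hω
    exact tendsto_env p (fun j => (hXval ω).1 j) hω
  have hU : Tendsto (fun n : ℕ => ∫ ω, upEnv p (1/((n:ℝ)+1)) (X ω, Z ω) ∂μ) atTop
      (𝓝 (∫ ω, treeLoss (X ω) (Z ω) p ∂μ)) := by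
    refine tendsto_integral_of_dominated_convergence (fun ω => 2*(|Z ω| + (C+2))^2)
      (fun n => ((measurable_upEnv p (1/((n:ℝ)+1))).comp_aemeasurable
        (hX.aemeasurable.prodMk hZ.aestronglyMeasurable.aemeasurable)).aestronglyMeasurable)
      (integrable_dom μ hZ (C+2)) (fun n => ae_of_all _ fun ω => ?_) ?_
    · have h := (env_abs_le hp1' hp2' (rseq_pos n).le (rseq_le_one n) (X ω, Z ω)).1
      rw [Real.norm_eq_abs]
      have h2 : C + 1 + 1 = C + 2 := by ring
      rw [h2] at h
      exact h
    · filter_upwards [hconv] with ω hω using hω.1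
  have hL : Tendsto (fun n : ℕ => ∫ ω, loEnv p (1/((n:ℝ)+1)) (X ω, Z ω) ∂μ) atTop
      (𝓝 (∫ ω, treeLoss (X ω) (Z ω) p ∂μ)) := by
    refine tendsto_integral_of_dominated_convergence (fun ω => 2*(|Z ω| + (C+2))^2)
      (fun n => ((measurable_loEnv p (1/((n:ℝ)+1))).comp_aemeasurable
        (hX.aemeasurable.prodMk hZ.aestronglyMeasurable.aemeasurable)).aestronglyMeasurable)
      (integrable_dom μ hZ (C+2)) (fun n => ae_of_all _ fun ω => ?_) ?_
    · have h := (env_abs_le hp1' hp2' (rseq_pos n).le (rseq_le_one n) (X ω, Z ω)).2.1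
      rw [Real.norm_eq_abs]
      have h2 : C + 1 + 1 = C + 2 := by ring
      rw [h2] at h
      exact h
    · filter_upwards [hconv] with ω hω using hω.2
  have h1 := hU.eventually (eventually_lt_nhds
    (lt_add_of_pos_right (∫ ω, treeLoss (X ω) (Z ω) p ∂μ) hε))
  have h2 := hL.eventually (eventually_gt_nhds
    (sub_lt_self (∫ ω, treeLoss (X ω) (Z ω) p ∂μ) hε))
  obtain ⟨n, hn1, hn2⟩ := (h1.and h2).exists
  exact ⟨1/((n:ℝ)+1), rseq_pos n, rseq_le_one n, hn1.le, hn2.le⟩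

/-- Strong law of large numbers specialised to our setting. -/
lemma slln (hX : Measurable X) (hZ : MemLp Z 2 μ)
    (W : ℕ → Ω → (Fin d → ℝ) × ℝ) (hWmeas : ∀ m, Measurable (W m))
    (hWindep : iIndepFun W μ)
    (hWident : ∀ m, Measure.map (W m) μ = Measure.map (fun ω => (X ω, Z ω)) μ)
    (f : (Fin d → ℝ) × ℝ → ℝ) (hf : Measurable f)
    (hint : Integrable (fun ω => f (X ω, Z ω)) μ) :
    ∀ᵐ ω ∂μ, Tendsto (fun M : ℕ => (M:ℝ)⁻¹ * ∑ m ∈ Finset.range M, f (W m ω)) atTop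
      (𝓝 (∫ ω, f (X ω, Z ω) ∂μ)) := by
  have hXZ : AEMeasurable (fun ω => (X ω, Z ω)) μ :=
    hX.aemeasurable.prodMk hZ.aestronglyMeasurable.aemeasurable
  have hid : ∀ m, IdentDistrib (fun ω => f (W m ω)) (fun ω => f (X ω, Z ω)) μ μ := fun m =>
    (⟨(hWmeas m).aemeasurable, hXZ, hWident m⟩ :
      IdentDistrib (W m) (fun ω => (X ω, Z ω)) μ μ).comp hf
  have hint' : Integrable (fun ω => f (W 0 ω)) μ := ((hid 0).integrable_iff).2 hint
  have hindep : Pairwise (Function.onFun (IndepFun · · μ) (fun m ω => f (W m ω))) := fun i j hij =>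
    (hWindep.indepFun hij).comp hf hf
  have h := strong_law_ae (fun m ω => f (W m ω)) hint' hindep
    (fun i => (hid i).trans (hid 0).symm)
  have hieq : (∫ ω, f (W 0 ω) ∂μ) = ∫ ω, f (X ω, Z ω) ∂μ := (hid 0).integral_eq
  filter_upwards [h] with ω hω
  rw [hieq] at hω
  simpa [smul_eq_mul] using hω

/-- Almost-sure uniform convergence of the empirical loss over `K`. -/
lemma uniform_conv (hX : Measurable X) (hXval : ∀ ω, X ω ∈ Set.Icc (0 : Fin d → ℝ) 1)
    (hdens : Measure.map X μ ≪ (volume : Measure (Fin d → ℝ))) (hZ : MemLp Z 2 μ)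
    (hC : 0 < C) {K : Set (ℝ × ℝ × (Fin d → ℝ))}
    (hK : K = Set.Icc (-C) C ×ˢ Set.Icc (-C) C ×ˢ Set.Icc (0 : Fin d → ℝ) 1)
    (W : ℕ → Ω → (Fin d → ℝ) × ℝ) (hWmeas : ∀ m, Measurable (W m))
    (hWindep : iIndepFun W μ)
    (hWident : ∀ m, Measure.map (W m) μ = Measure.map (fun ω => (X ω, Z ω)) μ)
    {ε : ℝ} (hε : 0 < ε) :
    ∀ᵐ ω ∂μ, ∀ᶠ M : ℕ in atTop, ∀ q ∈ K,
      |(M:ℝ)⁻¹ * ∑ m ∈ Finset.range M, treeLoss (W m ω).1 (W m ω).2 q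
        - ∫ ω', treeLoss (X ω') (Z ω') q ∂μ| ≤ ε := by
  have hKcoeff : ∀ p ∈ K, |p.1| ≤ C ∧ |p.2.1| ≤ C := by
    intro p hp
    rw [hK, Set.mem_prod] at hp
    obtain ⟨hp1, hp2⟩ := hp
    rw [Set.mem_prod] at hp2
    exact ⟨abs_le.2 ⟨hp1.1, hp1.2⟩, abs_le.2 ⟨hp2.1.1, hp2.1.2⟩⟩
  choose r hr0 hr1 hrU hrL using fun p : K =>
    exists_bracket μ hX hXval hdens hZ hC.le (hKcoeff p p.2).1 (hKcoeff p p.2).2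
      (ε := ε/3) (by positivity)
  have hKcomp : IsCompact K := by
    rw [hK]; exact isCompact_Icc.prod (isCompact_Icc.prod isCompact_Icc)
  obtain ⟨t, ht⟩ := hKcomp.elim_finite_subcover (fun p : K => Metric.ball (p : _) (r p))
    (fun p => Metric.isOpen_ball)
    (fun q hq => Set.mem_iUnion.2 ⟨⟨q, hq⟩, Metric.mem_ball_self (hr0 _)⟩)
  have hintU : ∀ p : K, Integrable (fun ω => upEnv (p : _) (r p) (X ω, Z ω)) μ := by
    intro p
    refine integrable_comp_of_bound μ (measurable_upEnv _ _) hX hZ (c := C + 2) (fun w => ?_)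
    have h := (env_abs_le (Cb := C + 1)
      (le_trans (hKcoeff p p.2).1 (by linarith)) (le_trans (hKcoeff p p.2).2 (by linarith))
      (hr0 p).le (hr1 p) w).1
    have h2 : C + 1 + 1 = C + 2 := by ring
    rwa [h2] at h
  have hintL : ∀ p : K, Integrable (fun ω => loEnv (p : _) (r p) (X ω, Z ω)) μ := by
    intro p
    refine integrable_comp_of_bound μ (measurable_loEnv _ _) hX hZ (c := C + 2) (fun w => ?_)
    have h := (env_abs_le (Cb := C + 1)
      (le_trans (hKcoeff p p.2).1 (by linarith)) (le_trans (hKcoeff p p.2).2 (by linarith))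
      (hr0 p).le (hr1 p) w).2.1
    have h2 : C + 1 + 1 = C + 2 := by ring
    rwa [h2] at h
  have hsl : ∀ᵐ ω ∂μ, ∀ p : {x : ↑K // x ∈ t},
      (Tendsto (fun M : ℕ => (M:ℝ)⁻¹ * ∑ m ∈ Finset.range M, upEnv (p.1 : _) (r p.1) (W m ω))
        atTop (𝓝 (∫ ω', upEnv (p.1 : _) (r p.1) (X ω', Z ω') ∂μ)) ∧
      Tendsto (fun M : ℕ => (M:ℝ)⁻¹ * ∑ m ∈ Finset.range M, loEnv (p.1 : _) (r p.1) (W m ω))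
        atTop (𝓝 (∫ ω', loEnv (p.1 : _) (r p.1) (X ω', Z ω') ∂μ))) := by
    rw [ae_all_iff]
    intro p
    exact (slln μ hX hZ W hWmeas hWindep hWident _ (measurable_upEnv _ _) (hintU p)).and
      (slln μ hX hZ W hWmeas hWindep hWident _ (measurable_loEnv _ _) (hintL p))
  filter_upwards [hsl] with ω hω
  have hev : ∀ᶠ M : ℕ in atTop, ∀ p : {x : ↑K // x ∈ t},
      ((M:ℝ)⁻¹ * ∑ m ∈ Finset.range M, upEnv (p.1 : _) (r p.1) (W m ω)
          < (∫ ω', upEnv (p.1 : _) (r p.1) (X ω', Z ω') ∂μ) + ε/3 ∧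
        (∫ ω', loEnv (p.1 : _) (r p.1) (X ω', Z ω') ∂μ) - ε/3
          < (M:ℝ)⁻¹ * ∑ m ∈ Finset.range M, loEnv (p.1 : _) (r p.1) (W m ω)) := by
    rw [eventually_all]
    intro p
    exact ((hω p).1.eventually (eventually_lt_nhds
        (lt_add_of_pos_right _ (by positivity)))).and
      ((hω p).2.eventually (eventually_gt_nhds (sub_lt_self _ (by positivity))))
  filter_upwards [hev] with M hM q hq
  obtain ⟨p, hp, hqp⟩ := Set.mem_iUnion₂.1 (ht hq)
  have hdist : dist q (p : ℝ × ℝ × (Fin d → ℝ)) ≤ r p := (Metric.mem_ball.1 hqp).le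
  have hbr := integral_bracket μ hX hZ hC.le (hr0 p).le (hr1 p)
    (hKcoeff p p.2).1 (hKcoeff p p.2).2 hdist
  have hsumU : (M:ℝ)⁻¹ * ∑ m ∈ Finset.range M, treeLoss (W m ω).1 (W m ω).2 q
      ≤ (M:ℝ)⁻¹ * ∑ m ∈ Finset.range M, upEnv (p : _) (r p) (W m ω) :=
    mul_le_mul_of_nonneg_left
      (Finset.sum_le_sum fun m _ => treeLoss_le_upEnv (hr0 p).le hdist (W m ω))
      (by positivity)
  have hsumL : (M:ℝ)⁻¹ * ∑ m ∈ Finset.range M, loEnv (p : _) (r p) (W m ω)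
      ≤ (M:ℝ)⁻¹ * ∑ m ∈ Finset.range M, treeLoss (W m ω).1 (W m ω).2 q :=
    mul_le_mul_of_nonneg_left
      (Finset.sum_le_sum fun m _ => loEnv_le_treeLoss (hr0 p).le hdist (W m ω))
      (by positivity)
  have h1 := (hM ⟨p, hp⟩).1
  have h2 := (hM ⟨p, hp⟩).2
  have h3 := hrU p
  have h4 := hrL p
  rw [abs_le]
  constructor
  · -- lower bound : ν q - ε ≤ ν_M q, via loEnv
    have hq_up : (∫ ω', treeLoss (X ω') (Z ω') q ∂μ)
        ≤ (∫ ω', treeLoss (X ω') (Z ω') (p : _) ∂μ) + ε/3 := hbr.2.trans h3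
    linarith
  · have hq_lo : (∫ ω', treeLoss (X ω') (Z ω') (p : _) ∂μ) - ε/3
        ≤ ∫ ω', treeLoss (X ω') (Z ω') q ∂μ := h4.trans hbr.1
    linarith

end Measure

/-- Deterministic argmin-consistency from uniform convergence. -/
lemma argmin_tendsto {K : Set (ℝ × ℝ × (Fin d → ℝ))} (hKc : IsCompact K) (hKne : K.Nonempty)
    {ν : (ℝ × ℝ × (Fin d → ℝ)) → ℝ} (hν : ContinuousOn ν K)
    {νM : ℕ → (ℝ × ℝ × (Fin d → ℝ)) → ℝ} (hνM0 : ∀ M q, 0 ≤ νM M q)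
    {G : ℕ → ℝ × ℝ × (Fin d → ℝ)} (hGK : ∀ M, G M ∈ K)
    (hGmin : ∀ M, νM M (G M) = sInf (νM M '' K))
    (hunif : ∀ ε : ℝ, 0 < ε → ∀ᶠ M in atTop, ∀ q ∈ K, |νM M q - ν q| ≤ ε) :
    Tendsto (fun M => Metric.infDist (G M) {p ∈ K | ν p = sInf (ν '' K)}) atTop (𝓝 0) := by
  obtain ⟨pst, hpstK, hpstmin⟩ := hKc.exists_isMinOn hKne hν
  have hmin : ∀ q ∈ K, ν pst ≤ ν q := fun q hq => isMinOn_iff.mp hpstmin q hq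
  have hbddν : BddBelow (ν '' K) := ⟨ν pst, fun y hy => by
    obtain ⟨q, hq, rfl⟩ := hy; exact hmin q hq⟩
  have hc : ν pst = sInf (ν '' K) := le_antisymm
    (le_csInf (hKne.image ν) (fun b hb => by obtain ⟨q, hq, rfl⟩ := hb; exact hmin q hq))
    (csInf_le hbddν ⟨pst, hpstK, rfl⟩)
  set c := sInf (ν '' K) with hcdef
  set S := {p ∈ K | ν p = c} with hSdef
  have hpstS : pst ∈ S := ⟨hpstK, hc⟩
  rw [Metric.tendsto_atTop]
  intro ε hε
  have hd0 : ∀ M : ℕ, dist (Metric.infDist (G M) S) 0 = Metric.infDist (G M) S := fun M => by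
    rw [Real.dist_0_eq_abs]; exact abs_of_nonneg Metric.infDist_nonneg
  by_cases hT : {q ∈ K | ε ≤ Metric.infDist q S}.Nonempty
  · set T := {q ∈ K | ε ≤ Metric.infDist q S} with hTdef
    have hTsub : T ⊆ K := fun q hq => hq.1
    have hTclosed : IsClosed T := by
      have he : T = K ∩ {q | ε ≤ Metric.infDist q S} := rfl
      rw [he]
      exact hKc.isClosed.inter (isClosed_le continuous_const (Metric.continuous_infDist_pt S))
    have hTc : IsCompact T := IsCompact.of_isClosed_subset hKc hTclosed hTsub
    obtain ⟨q0, hq0T, hq0min⟩ := hTc.exists_isMinOn hT (hν.mono hTsub)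
    have hq0K : q0 ∈ K := hq0T.1
    have hq0nS : q0 ∉ S := by
      intro hmem
      have h2 := hq0T.2
      rw [Metric.infDist_zero_of_mem hmem] at h2
      linarith
    have hq0ne : ν q0 ≠ c := fun h => hq0nS ⟨hq0K, h⟩
    have hq0ge : c ≤ ν q0 := csInf_le hbddν ⟨q0, hq0K, rfl⟩
    have hδ : 0 < ν q0 - c := sub_pos.2 (lt_of_le_of_ne hq0ge (Ne.symm hq0ne))
    set δ := ν q0 - c with hδdef
    obtain ⟨N, hN⟩ := eventually_atTop.1 (hunif (δ/3) (by positivity))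
    refine ⟨N, fun M hM => ?_⟩
    have hMun := hN M hM
    have h1 : ν (G M) ≤ νM M (G M) + δ/3 := by
      have := hMun _ (hGK M); rw [abs_le] at this; linarith [this.1]
    have h2 : νM M (G M) ≤ νM M pst := by
      rw [hGmin M]
      exact csInf_le ⟨0, fun y hy => by obtain ⟨q, hq, rfl⟩ := hy; exact hνM0 M q⟩
        ⟨pst, hpstK, rfl⟩
    have h3 : νM M pst ≤ ν pst + δ/3 := by
      have := hMun pst hpstK; rw [abs_le] at this; linarith [this.1]
    have h4 : ν (G M) < ν q0 := by
      have hcc : ν pst = c := hc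
      have : δ = ν q0 - c := hδdef
      linarith
    have hGnotT : G M ∉ T := fun hmem => absurd (isMinOn_iff.mp hq0min _ hmem) (not_le.2 h4)
    have hlt : ¬ ε ≤ Metric.infDist (G M) S := fun hge => hGnotT ⟨hGK M, hge⟩
    rw [hd0 M]
    exact not_le.1 hlt
  · refine ⟨0, fun M _ => ?_⟩
    rw [hd0 M]
    by_contra hge
    exact hT ⟨G M, hGK M, not_lt.1 hge⟩

end TreeAux

/-- Let `X` be valued in `[0,1]^d` with a density w.r.t. Lebesgue measure, `Z` square
integrable, and `((X_m, Z_m))` i.i.d. copies of `(X, Z)`.  With the empirical loss `ν_M` and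
the expected loss `ν` as above, fix `C > 0`, `K = [−C, C]² × [0,1]^d`,
`S* = {(α, β, a) ∈ K : ν(α, β, a) = inf_K ν}`, and a family of minimizers
`(α_M, β_M, a_M) ∈ K` of `ν_M` over `K`.  Then, almost surely, the distance from
`(α_M, β_M, a_M)` to `S*` tends to `0` as `M → ∞`. -/
theorem tendsto_infDist_empirical_tree_loss_argmin {Ω : Type*} [MeasurableSpace Ω]
    (μ : Measure Ω) [IsProbabilityMeasure μ]
    {d : ℕ} (X : Ω → (Fin d → ℝ)) (hX : Measurable X)
    (hXval : ∀ ω, X ω ∈ Set.Icc (0 : Fin d → ℝ) 1)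
    (hdens : Measure.map X μ ≪ (volume : Measure (Fin d → ℝ)))
    (Z : Ω → ℝ) (hZ : MemLp Z 2 μ)
    (W : ℕ → Ω → (Fin d → ℝ) × ℝ) (hWmeas : ∀ m, Measurable (W m))
    (hWindep : iIndepFun W μ)
    (hWident : ∀ m, Measure.map (W m) μ = Measure.map (fun ω => (X ω, Z ω)) μ)
    (C : ℝ) (hC : 0 < C)
    (K : Set (ℝ × ℝ × (Fin d → ℝ)))
    (hK : K = Set.Icc (-C) C ×ˢ Set.Icc (-C) C ×ˢ Set.Icc (0 : Fin d → ℝ) 1)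
    (g : ℕ → Ω → ℝ × ℝ × (Fin d → ℝ))
    (hgK : ∀ M ω, g M ω ∈ K)
    (hgmin : ∀ (M : ℕ) ω, (M : ℝ)⁻¹ * (∑ m ∈ Finset.range M, treeLoss (W m ω).1 (W m ω).2 (g M ω))
      = sInf ((fun p => (M : ℝ)⁻¹ * ∑ m ∈ Finset.range M, treeLoss (W m ω).1 (W m ω).2 p) '' K)) :
    ∀ᵐ ω ∂μ,
      Tendsto (fun M : ℕ => Metric.infDist (g M ω)
          {p ∈ K | (∫ ω', treeLoss (X ω') (Z ω') p ∂μ)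
            = sInf ((fun p' => ∫ ω', treeLoss (X ω') (Z ω') p' ∂μ) '' K)})
        atTop (nhds 0) := by
    classical
  set ν : (ℝ × ℝ × (Fin d → ℝ)) → ℝ := fun p => ∫ ω', treeLoss (X ω') (Z ω') p ∂μ with hνdef
  have hKcoeff : ∀ p ∈ K, |p.1| ≤ C ∧ |p.2.1| ≤ C := by
    intro p hp
    rw [hK, Set.mem_prod] at hp
    obtain ⟨hp1, hp2⟩ := hp
    rw [Set.mem_prod] at hp2
    exact ⟨abs_le.2 ⟨hp1.1, hp1.2⟩, abs_le.2 ⟨hp2.1.1, hp2.1.2⟩⟩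
  have hKcomp : IsCompact K := by
    rw [hK]; exact isCompact_Icc.prod (isCompact_Icc.prod isCompact_Icc)
  have hKne : K.Nonempty := by
    refine ⟨(0, 0, (0 : Fin d → ℝ)), ?_⟩
    rw [hK]
    exact ⟨⟨show -C ≤ (0:ℝ) by linarith, show (0:ℝ) ≤ C by linarith⟩,
      ⟨show -C ≤ (0:ℝ) by linarith, show (0:ℝ) ≤ C by linarith⟩,
      le_rfl, fun j => zero_le_one⟩
  -- continuity of the expected loss on K
  have hνcont : ContinuousOn ν K := by
    intro p hp
    apply ContinuousAt.continuousWithinAt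
    rw [Metric.continuousAt_iff]
    intro ε hε
    obtain ⟨r, hr0, hr1, hU, hL⟩ := TreeAux.exists_bracket μ hX hXval hdens hZ hC.le
      (hKcoeff p hp).1 (hKcoeff p hp).2 (ε := ε/3) (by positivity)
    refine ⟨r, hr0, fun {q} hq => ?_⟩
    have hbr_q := TreeAux.integral_bracket μ hX hZ hC.le hr0.le hr1
      (hKcoeff p hp).1 (hKcoeff p hp).2 hq.le
    have hbr_p := TreeAux.integral_bracket μ hX hZ hC.le hr0.le hr1
      (hKcoeff p hp).1 (hKcoeff p hp).2 (show dist p p ≤ r by simp [hr0.le])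
    rw [Real.dist_eq, abs_lt]
    constructor
    · have := hbr_q.1
      have := hbr_p.2
      simp only [hνdef]
      linarith
    · have := hbr_q.2
      have := hbr_p.1
      simp only [hνdef]
      linarith
  -- uniform convergence, along the sequence ε = 1/(k+1)
  have hunifae : ∀ᵐ ω ∂μ, ∀ k : ℕ, ∀ᶠ M : ℕ in atTop, ∀ q ∈ K,
      |(M:ℝ)⁻¹ * ∑ m ∈ Finset.range M, treeLoss (W m ω).1 (W m ω).2 q - ν q| ≤ 1/((k:ℝ)+1) := by
    rw [ae_all_iff]
    intro k
    exact TreeAux.uniform_conv μ hX hXval hdens hZ hC hK W hWmeas hWindep hWident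
      (TreeAux.rseq_pos k)
  filter_upwards [hunifae] with ω hω
  refine TreeAux.argmin_tendsto hKcomp hKne hνcont
    (νM := fun M q => (M:ℝ)⁻¹ * ∑ m ∈ Finset.range M, treeLoss (W m ω).1 (W m ω).2 q)
    (fun M q => mul_nonneg (by positivity)
      (Finset.sum_nonneg fun m _ => TreeAux.treeLoss_nonneg _ _ _))
    (fun M => hgK M ω) (fun M => hgmin M ω) (fun ε hε => ?_)
  obtain ⟨k, hk⟩ := exists_nat_one_div_lt hε
  filter_upwards [hω k] with M hM q hq
  exact (hM q hq).trans hk.le
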